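/- Chi-squared upper tail bound (Lemma A4(a), upper part): Let n and d be positive integers with d < n, let Z be a random variable distributed as chi-squared with n − d degrees of freedom, and let ε > 0 satisfy nε > d. Then P(Z/n ≥ 1 + ε) ≤ exp(−min{(nε + d)²/(8(n − d)), (nε + d)/8}). -/

import Mathlib

open MeasureTheory Matrix

/-- Frobenius norm of a real matrix. -/
noncomputable def frobNorm {m n : Type*} [Fintype m] [Fintype n] (A : Matrix m n ℝ) : ℝ :=
  Real.sqrt (∑ i, ∑ j, (A i j) ^ 2)

/-- ℓ2 operator norm (largest singular value) of a real matrix. -/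
noncomputable def opNorm {m n : Type*} [Fintype m] [Fintype n] [DecidableEq n]
    (A : Matrix m n ℝ) : ℝ :=
  ‖LinearMap.toContinuousLinearMap (Matrix.toEuclideanLin A)‖

/-- Entrywise maximum absolute value of a real matrix. -/
noncomputable def maxNorm {m n : Type*} [Fintype m] [Fintype n] (A : Matrix m n ℝ) : ℝ :=
  ⨆ i, ⨆ j, |A i j|

/-- Smallest eigenvalue of a real symmetric matrix, via the Rayleigh quotient
(infimum of the quadratic form over the unit sphere). -/
noncomputable def lambdaMin {n : Type*} [Fintype n] (A : Matrix n n ℝ) : ℝ :=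
  ⨅ x : {x : n → ℝ // ∑ i, x i ^ 2 = 1}, ∑ i, ∑ j, x.1 i * A i j * x.1 j

/-- Largest eigenvalue of a real symmetric matrix, via the Rayleigh quotient
(supremum of the quadratic form over the unit sphere). -/
noncomputable def lambdaMax {n : Type*} [Fintype n] (A : Matrix n n ℝ) : ℝ :=
  ⨆ x : {x : n → ℝ // ∑ i, x i ^ 2 = 1}, ∑ i, ∑ j, x.1 i * A i j * x.1 j

/-- Submatrix of `U` assembling the columns indexed by the finite set `ξ`. -/
def colSub {n p : ℕ} (U : Matrix (Fin n) (Fin p) ℝ) (ξ : Finset (Fin p)) :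
    Matrix (Fin n) {j : Fin p // j ∈ ξ} ℝ :=
  Matrix.of fun i j => U i j.1

/-- For `0 ≤ u ≤ 1/2`, `-(u + u²) ≤ log (1 - u)`. -/
lemma aux_log_one_sub_ge {u : ℝ} (h0 : 0 ≤ u) (h1 : u ≤ 1/2) :
    -(u + u^2) ≤ Real.log (1 - u) := by
  have h2 : (0:ℝ) < 1 - u := by linarith
  rw [Real.le_log_iff_exp_le h2, Real.exp_neg]
  have hv : (0:ℝ) ≤ u + u^2 := by positivity
  have hexp : 1 + (u + u^2) + (u + u^2)^2/2 ≤ Real.exp (u + u^2) :=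
    Real.quadratic_le_exp_of_nonneg hv
  have hE : (0:ℝ) < Real.exp (u + u^2) := Real.exp_pos _
  rw [inv_le_comm₀ hE h2, inv_le_iff_one_le_mul₀ h2]
  nlinarith [hexp]

open ProbabilityTheory Set Real in
/-- chi-squared upper tail bound, Lemma A4(a), upper part.
Here the chi-squared distribution with `n - d` degrees of freedom is the Gamma
distribution with shape `(n-d)/2` and rate `1/2`.  If `nε > d` then
`P(Z/n ≥ 1 + ε) ≤ exp(-min{(nε + d)²/(8(n-d)), (nε + d)/8})`. -/
theorem chi_squared_upper_tail
    {Ω : Type*} [MeasureSpace Ω] [IsProbabilityMeasure (volume : Measure Ω)]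
    (n d : ℕ) (hd : 0 < d) (hdn : d < n)
    (Z : Ω → ℝ)
    (hZ : Measure.map Z volume = ProbabilityTheory.gammaMeasure (((n : ℝ) - d) / 2) (1 / 2))
    (ε : ℝ) (hε : 0 < ε) (h : (d : ℝ) < n * ε) :
    volume {ω | 1 + ε ≤ Z ω / n} ≤
      ENNReal.ofReal (Real.exp (-(min (((n : ℝ) * ε + d) ^ 2 / (8 * ((n : ℝ) - d)))
        (((n : ℝ) * ε + d) / 8)))) := by
  have hn : (0:ℝ) < n := by exact_mod_cast hd.trans hdn
  have hdR : (0:ℝ) < d := by exact_mod_cast hd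
  set k : ℝ := (n:ℝ) - d with hk_def
  set t : ℝ := (n:ℝ) * ε + d with ht_def
  have hk : 0 < k := by
    have : (d:ℝ) < n := by exact_mod_cast hdn
    simp only [hk_def]; linarith
  have ht : 0 < t := by simp only [ht_def]; nlinarith
  set a : ℝ := k + t with ha_def
  have ha : 0 < a := by simp only [ha_def]; linarith
  set s : ℝ := min (t / (4*k)) (1/4) with hs_def
  have hs0 : 0 < s := lt_min (by positivity) (by norm_num)
  have hs4 : s ≤ 1/4 := min_le_right _ _
  have hhalf : (0:ℝ) < 1/2 - s := by linarith
  set k2 : ℝ := k / 2 with hk2_def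
  have hk2 : 0 < k2 := by simp only [hk2_def]; positivity
  set C : ℝ := (1/2:ℝ) ^ k2 / (1/2 - s) ^ k2 with hC_def
  have hCpos : 0 < C := by
    apply div_pos (Real.rpow_pos_of_pos (by norm_num) _) (Real.rpow_pos_of_pos hhalf _)
  -- the set is the preimage of [a, ∞)
  have hset : {ω | 1 + ε ≤ Z ω / n} = Z ⁻¹' (Ici a) := by
    ext ω
    simp only [Set.mem_setOf_eq, Set.mem_preimage, Set.mem_Ici]
    rw [le_div_iff₀ hn]
    have : (1+ε)*(n:ℝ) = a := by rw [ha_def, hk_def, ht_def]; ring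
    rw [this]
  -- Z is a.e.-measurable
  have hprob : IsProbabilityMeasure (gammaMeasure k2 (1/2)) :=
    isProbabilityMeasure_gammaMeasure hk2 (by norm_num)
  have hZm : AEMeasurable Z (volume : Measure Ω) := by
    by_contra hc
    rw [Measure.map_of_not_aemeasurable hc] at hZ
    have h1 := hprob.measure_univ
    rw [← hZ] at h1
    simp at h1
  have hgm : Measurable (gammaPDF k2 (1/2 - s)) :=
    (measurable_gammaPDFReal _ _).ennreal_ofReal
  -- pointwise Chernoff bound on the density
  have hpoint : ∀ x ∈ Ici a, gammaPDF k2 (1/2) x ≤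
      ENNReal.ofReal (Real.exp (-(s*a)) * C) * gammaPDF k2 (1/2-s) x := by
    intro x hx
    have hxa : a ≤ x := hx
    have hx0 : (0:ℝ) ≤ x := le_trans ha.le hxa
    rw [gammaPDF_of_nonneg hx0, gammaPDF_of_nonneg hx0,
      ← ENNReal.ofReal_mul (by positivity)]
    refine ENNReal.ofReal_le_ofReal ?_
    have hCm : C * (1/2 - s) ^ k2 = (1/2:ℝ) ^ k2 :=
      div_mul_cancel₀ _ (Real.rpow_pos_of_pos hhalf _).ne'
    have hGa : 0 < Real.Gamma k2 := Real.Gamma_pos_of_pos hk2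
    have hB : 0 ≤ (1/2:ℝ) ^ k2 / Real.Gamma k2 * x ^ (k2-1) :=
      mul_nonneg (div_nonneg (Real.rpow_nonneg (by norm_num) _) hGa.le)
        (Real.rpow_nonneg hx0 _)
    have hexp : Real.exp (-((1/2)*x)) ≤ Real.exp (-(s*a)) * Real.exp (-((1/2-s)*x)) := by
      rw [← Real.exp_add, Real.exp_le_exp]
      nlinarith [mul_nonneg hs0.le (sub_nonneg.mpr hxa)]
    calc (1/2:ℝ) ^ k2 / Real.Gamma k2 * x ^ (k2-1) * Real.exp (-((1/2)*x))
        ≤ (1/2:ℝ) ^ k2 / Real.Gamma k2 * x ^ (k2-1) *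
            (Real.exp (-(s*a)) * Real.exp (-((1/2-s)*x))) :=
          mul_le_mul_of_nonneg_left hexp hB
      _ = Real.exp (-(s*a)) * C *
            ((1/2 - s) ^ k2 / Real.Gamma k2 * x ^ (k2-1) * Real.exp (-((1/2-s)*x))) := by
          rw [← hCm]; ring
  -- the final exponent inequality
  have hu := aux_log_one_sub_ge (u := 2*s) (by linarith) (by linarith)
  have h2s : (0:ℝ) < 1 - 2*s := by linarith
  have hlog : Real.log (1/2) - Real.log (1/2 - s) = -Real.log (1 - 2*s) := by
    have h12 : (1/2 - s : ℝ) = (1 - 2*s) * (1/2) := by ring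
    rw [h12, Real.log_mul h2s.ne' (by norm_num)]
    ring
  have hC_eq : C = Real.exp ((-Real.log (1 - 2*s)) * k2) := by
    rw [hC_def, Real.rpow_def_of_pos (by norm_num : (0:ℝ) < 1/2),
      Real.rpow_def_of_pos hhalf, ← Real.exp_sub, ← hlog]
    congr 1; ring
  have hstep : (-Real.log (1 - 2*s)) * k2 ≤ (2*s + (2*s)^2) * k2 :=
    mul_le_mul_of_nonneg_right (by linarith) hk2.le
  have hkey : -(s*a) + (2*s + (2*s)^2) * k2 ≤ -(min (t^2/(8*k)) (t/8)) := by
    rcases le_total (t / (4*k)) (1/4 : ℝ) with hc | hc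
    · have hs_eq : s = t / (4*k) := min_eq_left hc
      have h1 : -(s*a) + (2*s + (2*s)^2) * k2 = -(t^2/(8*k)) := by
        rw [hs_eq, ha_def, hk2_def]
        field_simp
        ring
      rw [h1]
      exact neg_le_neg (min_le_left _ _)
    · have hs_eq : s = (1/4 : ℝ) := min_eq_right hc
      have hkt : k ≤ t := by
        have := (le_div_iff₀ (by positivity : (0:ℝ) < 4*k)).mp hc
        linarith
      have h1 : -(s*a) + (2*s + (2*s)^2) * k2 ≤ -(t/8) := by
        rw [hs_eq, ha_def, hk2_def]
        nlinarith
      exact h1.trans (neg_le_neg (min_le_right _ _))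
  have hfinal : Real.exp (-(s*a)) * C ≤
      Real.exp (-(min (t^2/(8*k)) (t/8))) := by
    rw [hC_eq, ← Real.exp_add, Real.exp_le_exp]
    linarith
  -- assemble
  rw [hset, ← Measure.map_apply_of_aemeasurable hZm measurableSet_Ici, hZ]
  rw [show gammaMeasure k2 (1/2) = volume.withDensity (gammaPDF k2 (1/2)) from rfl,
    withDensity_apply _ measurableSet_Ici]
  calc ∫⁻ x in Ici a, gammaPDF k2 (1/2) x
      ≤ ∫⁻ x in Ici a, ENNReal.ofReal (Real.exp (-(s*a)) * C) * gammaPDF k2 (1/2-s) x :=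
        setLIntegral_mono (hgm.const_mul _) hpoint
    _ ≤ ∫⁻ x, ENNReal.ofReal (Real.exp (-(s*a)) * C) * gammaPDF k2 (1/2-s) x :=
        setLIntegral_le_lintegral _ _
    _ = ENNReal.ofReal (Real.exp (-(s*a)) * C) * ∫⁻ x, gammaPDF k2 (1/2-s) x :=
        lintegral_const_mul _ hgm
    _ = ENNReal.ofReal (Real.exp (-(s*a)) * C) := by
        rw [lintegral_gammaPDF_eq_one hk2 hhalf, mul_one]
    _ ≤ ENNReal.ofReal (Real.exp (-(min (t^2/(8*k)) (t/8)))) :=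
        ENNReal.ofReal_le_ofReal hfinal
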